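/- Let g ∈ G_n and h ∈ G_k. Then for every N ∈ ℕ, the product A_N[n,g] * A_N[k,h] lies in the complex linear span of the elements A_N[m,r] with m ≤ n + k and r ∈ G_m. -/

import Mathlib

noncomputable section

/-- Embedding of permutations of `ℕ` into permutations of `V = X ⊕ (I × ℕ)`,
acting trivially on `X` and on the first factor of `I × ℕ`.  It restricts to an
embedding of `S_∞` into `S(V)`. -/
def embNat (I X : Type*) (τ : Equiv.Perm ℕ) : Equiv.Perm (X ⊕ I × ℕ) :=
  Equiv.sumCongr (Equiv.refl X) (Equiv.prodCongr (Equiv.refl I) τ)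

/-- `τ` fixes every `m ≥ n`, i.e. `τ` belongs to the subgroup `S_n ≤ S_∞`. -/
def fixesFrom (n : ℕ) (τ : Equiv.Perm ℕ) : Prop := ∀ m : ℕ, n ≤ m → τ m = m

/-- `G_n`: the set of elements of `G_∞` fixing every point of `V ∖ V_n`. -/
def Gset {I X : Type*} (Ginf : Subgroup (Equiv.Perm (X ⊕ I × ℕ))) (n : ℕ) :
    Set (Equiv.Perm (X ⊕ I × ℕ)) :=
  {g | g ∈ Ginf ∧ ∀ (i : I) (m : ℕ), n ≤ m → g (Sum.inr (i, m)) = Sum.inr (i, m)}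

/-- `K_n`-conjugacy of elements of `S(V)`:  `g' = κ g κ⁻¹` for some `κ ∈ K_n`,
where `K_n` is the image of `S_n` in `S(V)`. -/
def Kconj {I X : Type*} (n : ℕ) (g g' : Equiv.Perm (X ⊕ I × ℕ)) : Prop :=
  ∃ τ : Equiv.Perm ℕ, fixesFrom n τ ∧ g' = embNat I X τ * g * (embNat I X τ)⁻¹

/-- A permutation of `Fin N` extended to `ℕ` and then to `V`; these elements
form exactly the subgroup `K_N ≤ S(V)`. -/
def embFin (I X : Type*) (N : ℕ) (σ : Equiv.Perm (Fin N)) : Equiv.Perm (X ⊕ I × ℕ) :=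
  embNat I X (σ.extendDomain Fin.equivSubtype)

/-- The element `A_N[j,g] = (1/(N−j)!) Σ_{τ ∈ K_N} τ g τ⁻¹` of `ℂ[G_∞]`
(and `A_N[j,g] = 0` for `j > N`). -/
def AN (I X : Type*) (N j : ℕ) (g : Equiv.Perm (X ⊕ I × ℕ)) :
    MonoidAlgebra ℂ (Equiv.Perm (X ⊕ I × ℕ)) :=
  if j ≤ N then
    ((Nat.factorial (N - j) : ℂ))⁻¹ •
      ∑ σ : Equiv.Perm (Fin N),
        MonoidAlgebra.of ℂ (Equiv.Perm (X ⊕ I × ℕ))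
          (embFin I X N σ * g * (embFin I X N σ)⁻¹)
  else 0

/- ### Auxiliary lemmas -/

section Aux

variable {I X : Type*}

lemma embNat_mul (τ τ' : Equiv.Perm ℕ) :
    embNat I X (τ * τ') = embNat I X τ * embNat I X τ' := by
  ext v; rcases v with x | ⟨i, m⟩ <;> rfl

@[simp] lemma embNat_inr (τ : Equiv.Perm ℕ) (i : I) (m : ℕ) :
    embNat I X τ (Sum.inr (i, m)) = Sum.inr (i, τ m) := rfl

lemma embFin_inv (N : ℕ) (σ : Equiv.Perm (Fin N)) :
    (embFin I X N σ)⁻¹ = embFin I X N σ⁻¹ := rfl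

lemma embFin_mul (N : ℕ) (σ σ' : Equiv.Perm (Fin N)) :
    embFin I X N (σ * σ') = embFin I X N σ * embFin I X N σ' := by
  rw [embFin, embFin, embFin, ← Equiv.Perm.extendDomain_mul, embNat_mul]

@[simp] lemma embFin_inr (N : ℕ) (σ : Equiv.Perm (Fin N)) (i : I) (m : ℕ) :
    embFin I X N σ (Sum.inr (i, m)) = Sum.inr (i, σ.extendDomain Fin.equivSubtype m) := rfl

@[simp] lemma embFin_inv_inr (N : ℕ) (σ : Equiv.Perm (Fin N)) (i : I) (m : ℕ) :
    (embFin I X N σ)⁻¹ (Sum.inr (i, m))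
      = Sum.inr (i, (σ.extendDomain Fin.equivSubtype)⁻¹ m) := rfl

lemma ext_apply_lt {N : ℕ} (σ : Equiv.Perm (Fin N)) (j : Fin N) :
    σ.extendDomain Fin.equivSubtype (j : ℕ) = ((σ j : Fin N) : ℕ) := by
  simpa [Fin.equivSubtype] using Equiv.Perm.extendDomain_apply_image σ Fin.equivSubtype j

lemma ext_apply_ge {N : ℕ} (σ : Equiv.Perm (Fin N)) {j : ℕ} (h : N ≤ j) :
    σ.extendDomain Fin.equivSubtype j = j :=
  Equiv.Perm.extendDomain_apply_not_subtype σ Fin.equivSubtype (by omega)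

lemma embFin_mem_Ginf (Ginf : Subgroup (Equiv.Perm (X ⊕ I × ℕ)))
    (hGS : ∀ τ : Equiv.Perm ℕ, {m : ℕ | τ m ≠ m}.Finite → embNat I X τ ∈ Ginf)
    (N : ℕ) (σ : Equiv.Perm (Fin N)) : embFin I X N σ ∈ Ginf := by
  refine hGS _ ((Set.finite_Iio N).subset fun m hm => ?_)
  by_contra hNm
  exact hm (ext_apply_ge σ (by simpa using hNm))

lemma exists_perm_lt {N m : ℕ} (B : Finset (Fin N)) (hB : B.card ≤ m) :
    ∃ τ : Equiv.Perm (Fin N), ∀ j ∈ B, ((τ j : Fin N) : ℕ) < m := by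
  classical
  by_cases hNm : N ≤ m
  · exact ⟨1, fun j _ => lt_of_lt_of_le j.2 hNm⟩
  push_neg at hNm
  set T : Finset (Fin N) := Finset.univ.filter (fun j => (j : ℕ) < m) with hTdef
  have hmT : m ≤ T.card := by
    have hinj : Function.Injective (fun j : Fin m => (⟨(j : ℕ), lt_trans j.2 hNm⟩ : Fin N)) := by
      intro a b hab
      simpa [Fin.ext_iff] using hab
    calc m = (Finset.univ.image fun j : Fin m => (⟨(j : ℕ), lt_trans j.2 hNm⟩ : Fin N)).card := by
            rw [Finset.card_image_of_injective _ hinj, Finset.card_univ, Fintype.card_fin]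
      _ ≤ T.card := by
            refine Finset.card_le_card ?_
            intro x hx
            simp only [Finset.mem_image, Finset.mem_univ, true_and] at hx
            obtain ⟨j, rfl⟩ := hx
            simp [hTdef, j.2]
  obtain ⟨T', hT'sub, hT'card⟩ := Finset.exists_subset_card_eq (hB.trans hmT)
  have e1 : {x : Fin N // x ∈ B} ≃ {x : Fin N // x ∈ T'} := Finset.equivOfCardEq hT'card.symm
  have e2 : {x : Fin N // ¬ x ∈ B} ≃ {x : Fin N // ¬ x ∈ T'} := by
    apply Fintype.equivOfCardEq
    rw [Fintype.card_subtype_compl, Fintype.card_subtype_compl,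
      Fintype.card_coe, Fintype.card_coe, hT'card]
  refine ⟨(Equiv.sumCompl (· ∈ B)).symm.trans ((e1.sumCongr e2).trans (Equiv.sumCompl (· ∈ T'))), ?_⟩
  intro j hj
  have h1 : (Equiv.sumCompl (· ∈ B)).symm j = Sum.inl ⟨j, hj⟩ :=
    Equiv.sumCompl_symm_apply_of_pos hj
  have h2 : ((Equiv.sumCompl (· ∈ B)).symm.trans ((e1.sumCongr e2).trans
      (Equiv.sumCompl (· ∈ T')))) j = (e1 ⟨j, hj⟩ : Fin N) := by
    simp [Equiv.trans_apply, h1]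
  rw [h2]
  have hmem := hT'sub (e1 ⟨j, hj⟩).2
  simpa [hTdef] using hmem

/-- The key step: for `q ∈ G_∞` fixing everything with index `≥ N` and moving indices
only inside a set of size `≤ n + k`, the full `K_N`-average of `q` lies in the span. -/
lemma sum_conj_mem_span
    (Ginf : Subgroup (Equiv.Perm (X ⊕ I × ℕ)))
    (hGS : ∀ τ : Equiv.Perm ℕ, {m : ℕ | τ m ≠ m}.Finite → embNat I X τ ∈ Ginf)
    (n k N : ℕ) (q : Equiv.Perm (X ⊕ I × ℕ)) (hq : q ∈ Ginf)
    (hqfix : ∀ (i : I) (j : ℕ), N ≤ j → q (Sum.inr (i, j)) = Sum.inr (i, j))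
    (B : Finset (Fin N)) (hBcard : B.card ≤ n + k)
    (hBfix : ∀ j : Fin N, j ∉ B → ∀ i : I, q (Sum.inr (i, (j : ℕ))) = Sum.inr (i, (j : ℕ))) :
    (∑ σ : Equiv.Perm (Fin N),
        MonoidAlgebra.of ℂ (Equiv.Perm (X ⊕ I × ℕ)) (embFin I X N σ * q * (embFin I X N σ)⁻¹))
      ∈ Submodule.span ℂ
          {x : MonoidAlgebra ℂ (Equiv.Perm (X ⊕ I × ℕ)) |
            ∃ m : ℕ, m ≤ n + k ∧ ∃ r ∈ Gset Ginf m, x = AN I X N m r} := by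
  classical
  set m := min (n + k) N with hm
  have hmN : m ≤ N := min_le_right _ _
  have hmnk : m ≤ n + k := min_le_left _ _
  have hBm : B.card ≤ m := by
    refine le_min hBcard ?_
    calc B.card ≤ (Finset.univ : Finset (Fin N)).card := Finset.card_le_card (Finset.subset_univ B)
      _ = N := by simp
  obtain ⟨τ, hτ⟩ := exists_perm_lt B hBm
  set r := embFin I X N τ * q * (embFin I X N τ)⁻¹ with hr
  have hrG : r ∈ Gset Ginf m := by
    constructor
    · exact mul_mem (mul_mem (embFin_mem_Ginf Ginf hGS N τ) hq)
        (inv_mem (embFin_mem_Ginf Ginf hGS N τ))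
    · intro i j hj
      have hrap : r (Sum.inr (i, j))
          = (embFin I X N τ) (q ((embFin I X N τ)⁻¹ (Sum.inr (i, j)))) := rfl
      rcases lt_or_ge j N with hjN | hjN
      · set j₀ : Fin N := τ⁻¹ ⟨j, hjN⟩ with hj₀
        have hτj₀ : (τ.extendDomain Fin.equivSubtype) (j₀ : ℕ) = j := by
          rw [ext_apply_lt]
          simp [hj₀]
        have hj₀B : j₀ ∉ B := by
          intro hmem
          have h2 := hτ j₀ hmem
          rw [hj₀] at h2
          simp only [Equiv.Perm.coe_inv, Equiv.apply_symm_apply] at h2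
          omega
        have hinv : (τ.extendDomain Fin.equivSubtype)⁻¹ j = (j₀ : ℕ) :=
          (Equiv.Perm.inv_eq_iff_eq).mpr hτj₀.symm
        rw [hrap, embFin_inv_inr, hinv, hBfix j₀ hj₀B i, embFin_inr, hτj₀]
      · have h1 : (τ.extendDomain Fin.equivSubtype)⁻¹ j = j :=
          (Equiv.Perm.inv_eq_iff_eq).mpr (ext_apply_ge τ hjN).symm
        rw [hrap, embFin_inv_inr, h1, hqfix i j hjN, embFin_inr, ext_apply_ge τ hjN]
  have hsum : (∑ σ : Equiv.Perm (Fin N),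
        MonoidAlgebra.of ℂ (Equiv.Perm (X ⊕ I × ℕ)) (embFin I X N σ * q * (embFin I X N σ)⁻¹))
      = ∑ σ : Equiv.Perm (Fin N),
        MonoidAlgebra.of ℂ (Equiv.Perm (X ⊕ I × ℕ)) (embFin I X N σ * r * (embFin I X N σ)⁻¹) := by
    refine Fintype.sum_equiv (Equiv.mulRight τ⁻¹) _ _ (fun σ => ?_)
    congr 1
    simp only [Equiv.coe_mulRight, embFin_mul, ← embFin_inv, hr, mul_inv_rev]
    group
  have hAN : (∑ σ : Equiv.Perm (Fin N),
        MonoidAlgebra.of ℂ (Equiv.Perm (X ⊕ I × ℕ)) (embFin I X N σ * r * (embFin I X N σ)⁻¹))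
      = ((N - m).factorial : ℂ) • AN I X N m r := by
    rw [AN, if_pos hmN, smul_smul, mul_inv_cancel₀, one_smul]
    exact_mod_cast Nat.cast_ne_zero.mpr (Nat.factorial_ne_zero _)
  rw [hsum, hAN]
  exact Submodule.smul_mem _ _ (Submodule.subset_span ⟨m, hmnk, r, hrG, rfl⟩)

end Aux

/-- For `g ∈ G_n`, `h ∈ G_k` and every `N`, the product `A_N[n,g] * A_N[k,h]` lies in the
complex linear span of the elements `A_N[m,r]` with `m ≤ n + k` and `r ∈ G_m`. -/
theorem AN_mul_AN_mem_span
    {I X : Type*} [Finite I] [Countable X]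
    (Ginf : Subgroup (Equiv.Perm (X ⊕ I × ℕ)))
    (hGfs : ∀ g ∈ Ginf, {v : X ⊕ I × ℕ | g v ≠ v}.Finite)
    (hGS : ∀ τ : Equiv.Perm ℕ, {m : ℕ | τ m ≠ m}.Finite → embNat I X τ ∈ Ginf)
    (n k : ℕ) (g h : Equiv.Perm (X ⊕ I × ℕ))
    (hg : g ∈ Gset Ginf n) (hh : h ∈ Gset Ginf k) (N : ℕ) :
    AN I X N n g * AN I X N k h
      ∈ Submodule.span ℂ
          {x : MonoidAlgebra ℂ (Equiv.Perm (X ⊕ I × ℕ)) |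
            ∃ m : ℕ, m ≤ n + k ∧ ∃ r ∈ Gset Ginf m, x = AN I X N m r} := by
  classical
  by_cases hn : n ≤ N
  swap
  · rw [AN, if_neg hn, zero_mul]
    exact Submodule.zero_mem _
  by_cases hk : k ≤ N
  swap
  · have hzero : AN I X N k h = 0 := by rw [AN, if_neg hk]
    rw [hzero, mul_zero]
    exact Submodule.zero_mem _
  rw [AN, if_pos hn, AN, if_pos hk, smul_mul_smul_comm, Finset.sum_mul_sum]
  refine Submodule.smul_mem _ _ ?_
  have hswap : ∀ σ : Equiv.Perm (Fin N),
      (∑ σ' : Equiv.Perm (Fin N),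
        MonoidAlgebra.of ℂ (Equiv.Perm (X ⊕ I × ℕ)) (embFin I X N σ * g * (embFin I X N σ)⁻¹)
          * MonoidAlgebra.of ℂ (Equiv.Perm (X ⊕ I × ℕ)) (embFin I X N σ' * h * (embFin I X N σ')⁻¹))
      = ∑ ρ : Equiv.Perm (Fin N),
        MonoidAlgebra.of ℂ (Equiv.Perm (X ⊕ I × ℕ))
          (embFin I X N σ * (g * embFin I X N ρ * h * (embFin I X N ρ)⁻¹) * (embFin I X N σ)⁻¹) := by
    intro σ
    refine Fintype.sum_equiv (Equiv.mulLeft σ⁻¹) _ _ (fun ρ => ?_)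
    rw [← map_mul]
    congr 1
    simp only [Equiv.coe_mulLeft, embFin_mul, ← embFin_inv, mul_inv_rev]
    group
  rw [Finset.sum_congr rfl (fun σ _ => hswap σ), Finset.sum_comm]
  refine Submodule.sum_mem _ (fun ρ _ => ?_)
  set q := g * embFin I X N ρ * h * (embFin I X N ρ)⁻¹ with hqdef
  set ρ' := ρ.extendDomain Fin.equivSubtype with hρ'
  have hqap : ∀ (i : I) (j : ℕ),
      q (Sum.inr (i, j)) = g (embFin I X N ρ (h ((embFin I X N ρ)⁻¹ (Sum.inr (i, j))))) :=
    fun i j => rfl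
  have hqG : q ∈ Ginf :=
    mul_mem (mul_mem (mul_mem hg.1 (embFin_mem_Ginf Ginf hGS N ρ)) hh.1)
      (inv_mem (embFin_mem_Ginf Ginf hGS N ρ))
  have hqfix : ∀ (i : I) (j : ℕ), N ≤ j → q (Sum.inr (i, j)) = Sum.inr (i, j) := by
    intro i j hj
    rw [hqap, embFin_inv_inr, ← hρ',
      (Equiv.Perm.inv_eq_iff_eq).mpr (ext_apply_ge ρ hj).symm,
      hh.2 i j (le_trans hk hj), embFin_inr, ← hρ', ext_apply_ge ρ hj,
      hg.2 i j (le_trans hn hj)]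
  set B : Finset (Fin N) :=
    (Finset.univ.filter fun j : Fin N => (j : ℕ) < n)
      ∪ (Finset.univ.filter fun j : Fin N => ρ'⁻¹ (j : ℕ) < k) with hB
  have hBcard : B.card ≤ n + k := by
    refine le_trans (Finset.card_union_le _ _) ?_
    have h1 : (Finset.univ.filter fun j : Fin N => (j : ℕ) < n).card ≤ n := by
      calc (Finset.univ.filter fun j : Fin N => (j : ℕ) < n).card
          ≤ (Finset.range n).card := by
            refine Finset.card_le_card_of_injOn (fun j : Fin N => (j : ℕ)) ?_
              (fun a _ b _ hab => Fin.ext hab)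
            intro a ha
            simp only [Finset.coe_filter, Finset.mem_univ, true_and, Set.mem_setOf_eq] at ha
            exact Finset.mem_range.mpr ha
        _ = n := Finset.card_range n
    have h2 : (Finset.univ.filter fun j : Fin N => ρ'⁻¹ (j : ℕ) < k).card ≤ k := by
      calc (Finset.univ.filter fun j : Fin N => ρ'⁻¹ (j : ℕ) < k).card
          ≤ (Finset.range k).card := by
            refine Finset.card_le_card_of_injOn (fun j : Fin N => ρ'⁻¹ (j : ℕ)) ?_
              (fun a _ b _ hab => Fin.ext (Equiv.injective _ hab))
            intro a ha
            simp only [Finset.coe_filter, Finset.mem_univ, true_and, Set.mem_setOf_eq] at ha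
            exact Finset.mem_range.mpr ha
        _ = k := Finset.card_range k
    omega
  have hBfix : ∀ j : Fin N, j ∉ B → ∀ i : I,
      q (Sum.inr (i, (j : ℕ))) = Sum.inr (i, (j : ℕ)) := by
    intro j hj i
    rw [hB] at hj
    simp only [Finset.mem_union, Finset.mem_filter, Finset.mem_univ, true_and, not_or,
      not_lt] at hj
    obtain ⟨hj1, hj2⟩ := hj
    rw [hqap, embFin_inv_inr, ← hρ', hh.2 i _ hj2, embFin_inr, ← hρ',
      Equiv.Perm.coe_inv, Equiv.apply_symm_apply, hg.2 i _ hj1]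
  exact sum_conj_mem_span Ginf hGS n k N q hqG hqfix B hBcard hBfix

end
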